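/- arXiv:2507.13060 — 4 statements merged into one kernel-verified Lean document; each statement's English description precedes it below -/
import Mathlib

section
/- Let V : ℝ → ℝ be convex, L-Lipschitz, and continuously differentiable, with e^{-V} a probability density on ℝ. Then there exists a constant C_V > 0, depending only on V, such that for all x ∈ ℝ: C_V^{-1} · min(∫_{-∞}^x e^{-V(y)} dy, ∫_x^∞ e^{-V(y)} dy) ≤ e^{-V(x)} ≤ C_V · min(∫_{-∞}^x e^{-V(y)} dy, ∫_x^∞ e^{-V(y)} dy). -/
open MeasureTheory Real Set Filter Topology

lemma exp_tail_integrable (x s : ℝ) (hs : 0 < s) :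
    IntegrableOn (fun y => Real.exp (-(s * (y - x)))) (Set.Ioi x) := by
  have h : IntegrableOn (fun y => Real.exp (s * x) * Real.exp (-s * y)) (Set.Ioi x) :=
    (exp_neg_integrableOn_Ioi x hs).const_mul (Real.exp (s * x))
  refine h.congr_fun ?_ measurableSet_Ioi
  intro y _
  show Real.exp (s * x) * Real.exp (-s * y) = Real.exp (-(s * (y - x)))
  rw [← Real.exp_add]
  congr 1
  ring

lemma exp_tail_integral (x s : ℝ) (hs : 0 < s) :
    (∫ y in Set.Ioi x, Real.exp (-(s * (y - x)))) = 1 / s := by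
  have hderiv : ∀ y ∈ Set.Ici x,
      HasDerivAt (fun y => -(Real.exp (-(s * (y - x))) / s)) (Real.exp (-(s * (y - x)))) y := by
    intro y _
    have h1 : HasDerivAt (fun y : ℝ => -(s * (y - x))) (-s) y := by
      have h := (((hasDerivAt_id y).sub_const x).const_mul s).neg
      simp only [mul_one] at h
      exact h
    have h2 : HasDerivAt (fun y => -(Real.exp (-(s * (y - x))) / s))
        (-(Real.exp (-(s * (y - x))) * -s / s)) y :=
      (h1.exp.div_const s).neg
    convert h2 using 1
    field_simp
  have htend : Tendsto (fun y => -(Real.exp (-(s * (y - x))) / s)) atTop (nhds 0) := by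
    have h1 : Tendsto (fun y : ℝ => -(s * (y - x))) atTop atBot := by
      apply Filter.tendsto_neg_atBot_iff.mpr
      exact (tendsto_atTop_add_const_right _ (-x) tendsto_id).const_mul_atTop hs
    have h2 := (Real.tendsto_exp_atBot.comp h1).div_const s |>.neg
    simpa using h2
  have := integral_Ioi_of_hasDerivAt_of_tendsto
    ((hderiv x (le_refl x)).continuousAt.continuousWithinAt)
    (fun y hy => hderiv y (Set.Ioi_subset_Ici_self hy)) (exp_tail_integrable x s hs) htend
  rw [this]
  simp

lemma tail_bound (V : ℝ → ℝ) (hm_int : Integrable (fun x => Real.exp (-V x)))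
    (x s : ℝ) (hs : 0 < s) (h : ∀ y, x ≤ y → V x + s * (y - x) ≤ V y) :
    (∫ y in Set.Ici x, Real.exp (-V y)) ≤ (1 / s) * Real.exp (-V x) := by
  rw [integral_Ici_eq_integral_Ioi]
  have hint2 : IntegrableOn (fun y => Real.exp (-V x) * Real.exp (-(s * (y - x)))) (Set.Ioi x) :=
    (exp_tail_integrable x s hs).const_mul _
  have hle : (∫ y in Set.Ioi x, Real.exp (-V y)) ≤
      ∫ y in Set.Ioi x, Real.exp (-V x) * Real.exp (-(s * (y - x))) := by
    refine setIntegral_mono_on hm_int.integrableOn hint2 measurableSet_Ioi ?_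
    intro y hy
    rw [← Real.exp_add]
    apply Real.exp_le_exp.mpr
    have := h y (le_of_lt hy)
    linarith
  calc (∫ y in Set.Ioi x, Real.exp (-V y)) ≤ _ := hle
    _ = Real.exp (-V x) * (1 / s) := by rw [integral_const_mul, exp_tail_integral x s hs]
    _ = (1 / s) * Real.exp (-V x) := by ring

lemma right_bound (V : ℝ → ℝ) (ℓ : ℝ) (hℓ : 0 ≤ ℓ)
    (hVconv : ConvexOn ℝ Set.univ V)
    (hL : ∀ x : ℝ, 0 ≤ x → V x ≤ V 0 + ℓ * x)
    (hm_int : Integrable (fun x => Real.exp (-V x))) :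
    ∃ C > (0:ℝ), ∀ x : ℝ, 0 ≤ x → (∫ y in Set.Ici x, Real.exp (-V y)) ≤ C * Real.exp (-V x) := by
  -- find p > 0 with V 0 < V p
  obtain ⟨p, hp0, hpV⟩ : ∃ p : ℝ, 0 < p ∧ V 0 < V p := by
    by_contra hcon
    push_neg at hcon
    have hconst : Integrable (fun _ : ℝ => Real.exp (-V 0)) (volume.restrict (Set.Ioi 0)) := by
      refine Integrable.mono' hm_int.integrableOn aestronglyMeasurable_const ?_
      refine (ae_restrict_iff' measurableSet_Ioi).mpr (Filter.Eventually.of_forall ?_)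
      intro y hy
      rw [Real.norm_eq_abs, abs_of_pos (Real.exp_pos _)]
      exact Real.exp_le_exp.mpr (neg_le_neg (hcon y hy))
    rw [integrable_const_iff] at hconst
    rcases hconst with h | h
    · exact (Real.exp_pos _).ne' h
    · rw [isFiniteMeasure_restrict, Real.volume_Ioi] at h
      exact h rfl
  set s : ℝ := (V p - V 0) / p with hsdef
  have hs : 0 < s := div_pos (by linarith) hp0
  set M : ℝ := ∫ x, Real.exp (-V x) with hM
  refine ⟨max (M * Real.exp (V 0 + ℓ * p)) (1 / s),
    lt_of_lt_of_le (by positivity) (le_max_right _ _), ?_⟩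
  intro x hx
  rcases le_total x p with hxp | hpx
  · -- small x : use total mass
    have h1 : (∫ y in Set.Ici x, Real.exp (-V y)) ≤ M := by
      refine setIntegral_le_integral hm_int (Filter.Eventually.of_forall ?_)
      intro y; positivity
    have hM0 : 0 ≤ M := by
      rw [hM]; positivity
    have h2 : V x ≤ V 0 + ℓ * p := by
      have := hL x hx
      nlinarith
    have h3 : (1:ℝ) ≤ Real.exp (V 0 + ℓ * p) * Real.exp (-V x) := by
      rw [← Real.exp_add, ← Real.exp_zero]
      apply Real.exp_le_exp.mpr
      linarith
    calc (∫ y in Set.Ici x, Real.exp (-V y)) ≤ M := h1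
      _ = M * 1 := by ring
      _ ≤ M * (Real.exp (V 0 + ℓ * p) * Real.exp (-V x)) :=
        mul_le_mul_of_nonneg_left h3 hM0
      _ = (M * Real.exp (V 0 + ℓ * p)) * Real.exp (-V x) := by ring
      _ ≤ max (M * Real.exp (V 0 + ℓ * p)) (1 / s) * Real.exp (-V x) :=
        mul_le_mul_of_nonneg_right (le_max_left _ _) (Real.exp_pos _).le
  · -- large x : tail estimate
    have hkey : ∀ y, x ≤ y → V x + s * (y - x) ≤ V y := by
      intro y hy
      rcases eq_or_lt_of_le hy with rfl | hy'
      · simp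
      have hx0 : 0 < x := lt_of_lt_of_le hp0 hpx
      have h1 : s ≤ (V x - V 0) / (x - 0) := by
        rw [hsdef]
        have := hVconv.secant_mono (a := 0) (x := p) (y := x) (Set.mem_univ _)
          (Set.mem_univ _) (Set.mem_univ _) (ne_of_gt hp0) (ne_of_gt hx0) hpx
        simpa using this
      have h2 : (V x - V 0) / (x - 0) ≤ (V y - V x) / (y - x) :=
        hVconv.slope_mono_adjacent (Set.mem_univ _) (Set.mem_univ _) hx0 hy'
      have h3 : s ≤ (V y - V x) / (y - x) := le_trans h1 h2
      rw [le_div_iff₀ (by linarith)] at h3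
      linarith
    have := tail_bound V hm_int x s hs hkey
    calc (∫ y in Set.Ici x, Real.exp (-V y)) ≤ (1 / s) * Real.exp (-V x) := this
      _ ≤ max (M * Real.exp (V 0 + ℓ * p)) (1 / s) * Real.exp (-V x) :=
        mul_le_mul_of_nonneg_right (le_max_right _ _) (Real.exp_pos _).le

lemma upper_piece (V : ℝ → ℝ) (hm_int : Integrable (fun x => Real.exp (-V x)))
    (x ℓ : ℝ) (hℓ : ∀ y ∈ Set.Icc x (x + 1), V y ≤ V x + ℓ) :
    Real.exp (-V x) ≤ Real.exp ℓ * ∫ y in Set.Ici x, Real.exp (-V y) := by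
  have h1 : Real.exp (-(V x + ℓ)) ≤ ∫ y in Set.Icc x (x + 1), Real.exp (-V y) := by
    have hle : (∫ _ in Set.Icc x (x + 1), Real.exp (-(V x + ℓ))) ≤
        ∫ y in Set.Icc x (x + 1), Real.exp (-V y) := by
      refine setIntegral_mono_on (integrableOn_const ?_) hm_int.integrableOn
        measurableSet_Icc ?_
      · rw [Real.volume_Icc]; exact ENNReal.ofReal_ne_top
      · intro y hy
        exact Real.exp_le_exp.mpr (by have := hℓ y hy; linarith)
    rw [setIntegral_const, Real.volume_real_Icc] at hle
    simpa using hle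
  have h2 : (∫ y in Set.Icc x (x + 1), Real.exp (-V y)) ≤ ∫ y in Set.Ici x, Real.exp (-V y) := by
    refine setIntegral_mono_set hm_int.integrableOn
      (Filter.Eventually.of_forall fun y => (Real.exp_pos _).le) ?_
    exact Filter.Eventually.of_forall fun y hy => Set.Icc_subset_Ici_self hy
  have h3 : Real.exp (-V x) = Real.exp ℓ * Real.exp (-(V x + ℓ)) := by
    rw [← Real.exp_add]; ring_nf
  rw [h3]
  exact mul_le_mul_of_nonneg_left (le_trans h1 h2) (Real.exp_pos _).le

/-- Two-sided bound on the isoperimetric profile of a convex, Lipschitz,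
C¹ potential: e^{-V(x)} is comparable to min(F(x), 1−F(x)) uniformly in x. -/
theorem isoperimetric_profile_two_sided_bound
    (V : ℝ → ℝ) (L : NNReal)
    (hVconv : ConvexOn ℝ Set.univ V)
    (hVlip : LipschitzWith L V)
    (hVC1 : ContDiff ℝ 1 V)
    (hm_int : Integrable (fun x => Real.exp (-V x)))
    (hmass : ∫ x, Real.exp (-V x) = 1) :
    ∃ CV > (0:ℝ), ∀ x : ℝ,
      CV⁻¹ * min (∫ y in Set.Iic x, Real.exp (-V y)) (∫ y in Set.Ici x, Real.exp (-V y)) ≤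
          Real.exp (-V x) ∧
      Real.exp (-V x) ≤
        CV * min (∫ y in Set.Iic x, Real.exp (-V y)) (∫ y in Set.Ici x, Real.exp (-V y)) := by
  set W : ℝ → ℝ := fun y => V (-y) with hW
  have hdist : ∀ a b : ℝ, V a - V b ≤ (L : ℝ) * |a - b| := by
    intro a b
    have := hVlip.dist_le_mul a b
    rw [Real.dist_eq, Real.dist_eq] at this
    exact le_trans (le_abs_self _) this
  have hWconv : ConvexOn ℝ Set.univ W := by
    refine ⟨convex_univ, ?_⟩
    intro x _ y _ a b ha hb hab
    have h := hVconv.2 (Set.mem_univ (-x)) (Set.mem_univ (-y)) ha hb hab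
    show V (-(a • x + b • y)) ≤ a • V (-x) + b • V (-y)
    rw [neg_add, ← smul_neg, ← smul_neg]
    exact h
  have hWint : Integrable (fun x => Real.exp (-W x)) := by
    have := hm_int.comp_neg (μ := (volume : Measure ℝ))
    exact this
  have hVL : ∀ x : ℝ, 0 ≤ x → V x ≤ V 0 + (L : ℝ) * x := by
    intro x hx
    have := hdist x 0
    rw [sub_zero, abs_of_nonneg hx] at this
    linarith
  have hWL : ∀ x : ℝ, 0 ≤ x → W x ≤ W 0 + (L : ℝ) * x := by
    intro x hx
    have := hdist (-x) 0
    rw [sub_zero, abs_neg, abs_of_nonneg hx] at this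
    show V (-x) ≤ V (-0) + (L : ℝ) * x
    rw [neg_zero]
    linarith
  obtain ⟨Cr, hCr0, hCr⟩ := right_bound V (L : ℝ) L.coe_nonneg hVconv hVL hm_int
  obtain ⟨Cl, hCl0, hCl⟩ := right_bound W (L : ℝ) L.coe_nonneg hWconv hWL hWint
  have hFG : ∀ x : ℝ, (∫ y in Set.Iic x, Real.exp (-V y)) =
      ∫ y in Set.Ici (-x), Real.exp (-W y) := by
    intro x
    have h1 : (∫ y in Set.Iic x, Real.exp (-V y)) =
        ∫ y in Set.Iic x, Real.exp (-W (-y)) := by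
      apply setIntegral_congr_fun measurableSet_Iic
      intro y _
      simp [hW]
    have h2 := integral_comp_neg_Iic x (fun z => Real.exp (-W z))
    rw [h1, h2, ← integral_Ici_eq_integral_Ioi]
  refine ⟨max (max Cr Cl) (Real.exp (L : ℝ)), lt_of_lt_of_le (Real.exp_pos _)
    (le_max_right _ _), ?_⟩
  set CV : ℝ := max (max Cr Cl) (Real.exp (L : ℝ)) with hCVdef
  have hCV : 0 < CV := lt_of_lt_of_le (Real.exp_pos _) (le_max_right _ _)
  intro x
  set F : ℝ := ∫ y in Set.Iic x, Real.exp (-V y) with hFdef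
  set G : ℝ := ∫ y in Set.Ici x, Real.exp (-V y) with hGdef
  have hF0 : 0 ≤ F :=
    setIntegral_nonneg measurableSet_Iic fun y _ => (Real.exp_pos _).le
  have hG0 : 0 ≤ G :=
    setIntegral_nonneg measurableSet_Ici fun y _ => (Real.exp_pos _).le
  constructor
  · -- lower bound
    rw [inv_mul_le_iff₀ hCV]
    rcases le_total 0 x with hx | hx
    · calc min F G ≤ G := min_le_right _ _
        _ ≤ Cr * Real.exp (-V x) := hCr x hx
        _ ≤ CV * Real.exp (-V x) :=
          mul_le_mul_of_nonneg_right (le_trans (le_max_left _ _) (le_max_left _ _))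
            (Real.exp_pos _).le
    · have hx' : 0 ≤ -x := by linarith
      have := hCl (-x) hx'
      have hWx : Real.exp (-W (-x)) = Real.exp (-V x) := by simp [hW]
      calc min F G ≤ F := min_le_left _ _
        _ = ∫ y in Set.Ici (-x), Real.exp (-W y) := hFG x
        _ ≤ Cl * Real.exp (-W (-x)) := this
        _ = Cl * Real.exp (-V x) := by rw [hWx]
        _ ≤ CV * Real.exp (-V x) :=
          mul_le_mul_of_nonneg_right (le_trans (le_max_right _ _) (le_max_left _ _))
            (Real.exp_pos _).le
  · -- upper bound
    have hup_right : Real.exp (-V x) ≤ Real.exp (L : ℝ) * G := by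
      refine upper_piece V hm_int x (L : ℝ) ?_
      intro y hy
      have := hdist y x
      have habs : |y - x| ≤ 1 := by
        rw [abs_of_nonneg (by linarith [hy.1] : (0:ℝ) ≤ y - x)]
        linarith [hy.2]
      nlinarith [L.coe_nonneg]
    have hup_left : Real.exp (-V x) ≤ Real.exp (L : ℝ) * F := by
      have hWx : Real.exp (-W (-x)) = Real.exp (-V x) := by simp [hW]
      have := upper_piece W hWint (-x) (L : ℝ) ?_
      · rw [hWx] at this
        rw [hFdef, hFG x]
        exact this
      · intro y hy
        have := hdist (-y) x
        have habs : |(-y) - x| ≤ 1 :=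
          abs_le.mpr ⟨by linarith [hy.2], by linarith [hy.1]⟩
        have hWy : W y = V (-y) := rfl
        have hWnx : W (-x) = V x := by simp [hW]
        rw [hWy, hWnx]
        nlinarith [L.coe_nonneg]
    have hmin : Real.exp (-V x) ≤ Real.exp (L : ℝ) * min F G := by
      rw [mul_min_of_nonneg _ _ (Real.exp_pos _).le]
      exact le_min hup_left hup_right
    calc Real.exp (-V x) ≤ Real.exp (L : ℝ) * min F G := hmin
      _ ≤ CV * min F G :=
        mul_le_mul_of_nonneg_right (le_max_right _ _) (le_min hF0 hG0)
end

section
/- Let V : ℝ → ℝ be convex and L-Lipschitz with m = e^{-V} a continuous probability density on ℝ, and let C_V > 0 be a constant such that C_V^{-1} min(F_m(x), 1 − F_m(x)) ≤ m(x) ≤ C_V min(F_m(x), 1 − F_m(x)) for all x, where F_m(x) = ∫_{-∞}^x m. Let 0 < c < C and let f be a continuous positive probability density with c·m ≤ f ≤ C·m, with cumulative distribution function F_f. Let T = F_f^{-1} ∘ F_m be the monotone transport map from m to f. Then for all x ∈ ℝ: c/(C C_V²) ≤ m(x)/f(T(x)) ≤ C C_V²/c. In particular, where T is differentiable, c/(C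 C_V²) ≤ T'(x) ≤ C C_V²/c. -/
open MeasureTheory Real Set Filter Topology

lemma hasDerivAt_cdf {g : ℝ → ℝ} (hgc : Continuous g) (hgi : Integrable g) (x : ℝ) :
    HasDerivAt (fun z => ∫ y in Set.Iic z, g y) (g x) x := by
  have heq : (fun z => ∫ y in Set.Iic z, g y)
      = fun z => (∫ y in Set.Iic 0, g y) + ∫ t in (0:ℝ)..z, g t := by
    funext z
    have := intervalIntegral.integral_Iic_sub_Iic (hgi.integrableOn) (hgi.integrableOn)
      (a := 0) (b := z)
    linarith
  rw [heq]
  simpa [Pi.add_def] using (hasDerivAt_const x (∫ y in Set.Iic 0, g y)).add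
    (intervalIntegral.integral_hasDerivAt_right (a := 0) hgi.intervalIntegrable
      hgc.stronglyMeasurable.stronglyMeasurableAtFilter hgc.continuousAt)

/-- Two-sided Lipschitz bounds for the monotone transport map from
m = e^{-V} to f ∈ P_{c,C}, given a two-sided isoperimetric profile bound for m. -/
theorem transport_map_lipschitz_bounds
    (V : ℝ → ℝ) (L : NNReal)
    (hVconv : ConvexOn ℝ Set.univ V)
    (hVlip : LipschitzWith L V)
    (m : ℝ → ℝ) (hm : m = fun x => Real.exp (-V x))
    (hm_int : Integrable m) (hmass : ∫ x, m x = 1)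
    (CV : ℝ) (hCV : 0 < CV)
    (hiso : ∀ x : ℝ,
      CV⁻¹ * min (∫ y in Set.Iic x, m y) (1 - ∫ y in Set.Iic x, m y) ≤ m x ∧
      m x ≤ CV * min (∫ y in Set.Iic x, m y) (1 - ∫ y in Set.Iic x, m y))
    (c C : ℝ) (hc : 0 < c) (hcC : c < C)
    (f : ℝ → ℝ) (hfcont : Continuous f) (hfpos : ∀ x, 0 < f x)
    (hf_int : Integrable f) (hfprob : ∫ x, f x = 1)
    (hfbounds : ∀ x : ℝ, c * m x ≤ f x ∧ f x ≤ C * m x)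
    (T : ℝ → ℝ) (hTmono : StrictMono T)
    (hTtransport : ∀ x : ℝ, (∫ y in Set.Iic (T x), f y) = ∫ y in Set.Iic x, m y) :
    (∀ x : ℝ, c / (C * CV ^ 2) ≤ m x / f (T x) ∧ m x / f (T x) ≤ C * CV ^ 2 / c) ∧
    (∀ x : ℝ, DifferentiableAt ℝ T x →
      c / (C * CV ^ 2) ≤ deriv T x ∧ deriv T x ≤ C * CV ^ 2 / c) := by
  have hC : (0:ℝ) < C := hc.trans hcC
  have hmpos : ∀ x, 0 < m x := by
    intro x; rw [hm]; exact Real.exp_pos _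
  have hmcont : Continuous m := by
    rw [hm]; exact (Real.continuous_exp.comp (continuous_neg.comp hVlip.continuous))
  -- set-integral comparisons
  have hIic : ∀ z : ℝ, c * ∫ y in Set.Iic z, m y ≤ (∫ y in Set.Iic z, f y) ∧
      (∫ y in Set.Iic z, f y) ≤ C * ∫ y in Set.Iic z, m y := by
    intro z
    constructor
    · rw [← integral_const_mul]
      exact setIntegral_mono_on ((hm_int.const_mul c).integrableOn) (hf_int.integrableOn)
        measurableSet_Iic (fun y _ => (hfbounds y).1)
    · rw [← integral_const_mul]
      exact setIntegral_mono_on (hf_int.integrableOn) ((hm_int.const_mul C).integrableOn)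
        measurableSet_Iic (fun y _ => (hfbounds y).2)
  have hIoi : ∀ (g : ℝ → ℝ), Integrable g → (∫ x, g x) = 1 → ∀ z : ℝ,
      (1 - ∫ y in Set.Iic z, g y) = ∫ y in Set.Ioi z, g y := by
    intro g hgi hg1 z
    have h := integral_add_compl (measurableSet_Iic (a := z)) hgi
    rw [compl_Iic, hg1] at h
    linarith
  have hratio : ∀ x : ℝ, c / (C * CV ^ 2) ≤ m x / f (T x) ∧ m x / f (T x) ≤ C * CV ^ 2 / c := by
    intro x
    set AT := ∫ y in Set.Iic (T x), m y with hAT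
    set A := ∫ y in Set.Iic x, m y with hA
    set BT := ∫ y in Set.Iic (T x), f y with hBT
    have hBA : BT = A := hTtransport x
    -- tail comparison
    have htail : c * (1 - AT) ≤ 1 - BT ∧ 1 - BT ≤ C * (1 - AT) := by
      rw [hIoi m hm_int hmass (T x), hIoi f hf_int hfprob (T x)]
      constructor
      · rw [← integral_const_mul]
        exact setIntegral_mono_on ((hm_int.const_mul c).integrableOn) (hf_int.integrableOn)
          measurableSet_Ioi (fun y _ => (hfbounds y).1)
      · rw [← integral_const_mul]
        exact setIntegral_mono_on (hf_int.integrableOn) ((hm_int.const_mul C).integrableOn)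
          measurableSet_Ioi (fun y _ => (hfbounds y).2)
    have hisoT := hiso (T x)
    have hisoX := hiso x
    set MT := min AT (1 - AT) with hMT
    set MX := min A (1 - A) with hMX
    have hMTpos : 0 < MT := by
      have h1 := hisoT.2
      have h2 := hmpos (T x)
      nlinarith
    have hIicc := hIic (T x)
    -- MX bounds in terms of MT
    have hMX1 : c * MT ≤ MX := by
      rw [hMX, ← hBA]
      refine le_min ?_ ?_
      · calc c * MT ≤ c * AT := by nlinarith [min_le_left AT (1-AT)]
          _ ≤ BT := hIicc.1
      · calc c * MT ≤ c * (1 - AT) := by nlinarith [min_le_right AT (1-AT)]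
          _ ≤ 1 - BT := htail.1
    have hMX2 : MX ≤ C * MT := by
      rcases le_total AT (1 - AT) with h | h
      · have : MX ≤ BT := by rw [hMX, hBA]; exact min_le_left _ _
        calc MX ≤ BT := this
          _ ≤ C * AT := hIicc.2
          _ = C * MT := by rw [hMT, min_eq_left h]
      · have : MX ≤ 1 - BT := by rw [hMX, hBA]; exact min_le_right _ _
        calc MX ≤ 1 - BT := this
          _ ≤ C * (1 - AT) := htail.2
          _ = C * MT := by rw [hMT, min_eq_right h]
    have hmx1 : CV⁻¹ * MX ≤ m x := hisoX.1
    have hmx2 : m x ≤ CV * MX := hisoX.2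
    have hmT1 : CV⁻¹ * MT ≤ m (T x) := hisoT.1
    have hmT2 : m (T x) ≤ CV * MT := hisoT.2
    have hf1 : c * m (T x) ≤ f (T x) := (hfbounds (T x)).1
    have hf2 : f (T x) ≤ C * m (T x) := (hfbounds (T x)).2
    have hfTpos : 0 < f (T x) := hfpos (T x)
    have hmx1' : MX ≤ CV * m x := by
      have h := mul_le_mul_of_nonneg_left hmx1 hCV.le
      rwa [← mul_assoc, mul_inv_cancel₀ hCV.ne', one_mul] at h
    have hmT1' : MT ≤ CV * m (T x) := by
      have h := mul_le_mul_of_nonneg_left hmT1 hCV.le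
      rwa [← mul_assoc, mul_inv_cancel₀ hCV.ne', one_mul] at h
    constructor
    · rw [div_le_div_iff₀ (by positivity) hfTpos]
      calc c * f (T x) ≤ c * (C * m (T x)) := mul_le_mul_of_nonneg_left hf2 hc.le
        _ ≤ c * (C * (CV * MT)) :=
            mul_le_mul_of_nonneg_left (mul_le_mul_of_nonneg_left hmT2 hC.le) hc.le
        _ = C * CV * (c * MT) := by ring
        _ ≤ C * CV * (CV * m x) :=
            mul_le_mul_of_nonneg_left (hMX1.trans hmx1') (by positivity)
        _ = m x * (C * CV ^ 2) := by ring
    · rw [div_le_div_iff₀ hfTpos (by positivity)]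
      calc m x * c ≤ CV * MX * c := mul_le_mul_of_nonneg_right hmx2 hc.le
        _ ≤ CV * (C * MT) * c :=
            mul_le_mul_of_nonneg_right (mul_le_mul_of_nonneg_left hMX2 hCV.le) hc.le
        _ ≤ CV * (C * (CV * m (T x))) * c :=
            mul_le_mul_of_nonneg_right
              (mul_le_mul_of_nonneg_left (mul_le_mul_of_nonneg_left hmT1' hC.le) hCV.le) hc.le
        _ = (c * m (T x)) * (C * CV ^ 2) := by ring
        _ ≤ f (T x) * (C * CV ^ 2) := mul_le_mul_of_nonneg_right hf1 (by positivity)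
        _ = C * CV ^ 2 * f (T x) := by ring
  refine ⟨hratio, fun x hdiff => ?_⟩
  have hFf := hasDerivAt_cdf hfcont hf_int (T x)
  have hcomp : HasDerivAt (fun z => ∫ y in Set.Iic (T z), f y) (f (T x) * deriv T x) x :=
    hFf.comp x hdiff.hasDerivAt
  have heqfun : (fun z => ∫ y in Set.Iic (T z), f y) = fun z => ∫ y in Set.Iic z, m y :=
    funext hTtransport
  rw [heqfun] at hcomp
  have hFm := hasDerivAt_cdf hmcont hm_int x
  have huniq : f (T x) * deriv T x = m x := hcomp.unique hFm
  have hderiv : deriv T x = m x / f (T x) := by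
    rw [eq_div_iff (hfpos (T x)).ne', mul_comm]
    exact huniq
  rw [hderiv]
  exact hratio x
end

section
/- Let V : ℝ → ℝ be convex, L-Lipschitz, and continuously differentiable, with m = e^{-V} a continuous probability density on ℝ. Let 0 < c < C and let f be a continuous positive probability density with c·m ≤ f ≤ C·m, with cumulative distribution functions F_m, F_f, and let T = F_f^{-1} ∘ F_m be the monotone transport map from m to f. Then there exists a constant A > 0, depending only on c, C, and V, such that |T(x) − x| ≤ A for all x ∈ ℝ. -/
open MeasureTheory Real Set Filter Topology

lemma hasDerivAt_expMul (d : ℝ) (hd : d ≠ 0) (x : ℝ) :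
    HasDerivAt (fun y : ℝ => Real.exp (d * y) / d) (Real.exp (d * x)) x := by
  have h1 : HasDerivAt (fun y : ℝ => d * y) d x := by
    simpa using (hasDerivAt_id x).const_mul d
  have h2 := (Real.hasDerivAt_exp (d * x)).comp x h1
  have h3 := h2.div_const d
  simpa [mul_div_assoc, mul_div_cancel_right₀ _ hd] using h3

lemma exp_mul_integrableOn_Iic {d : ℝ} (hd : 0 < d) (t : ℝ) :
    IntegrableOn (fun y : ℝ => Real.exp (d * y)) (Iic t) := by
  have hc : Continuous fun y : ℝ => Real.exp (d * y) :=
    Real.continuous_exp.comp (continuous_const.mul continuous_id)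
  refine integrableOn_Iic_of_intervalIntegral_norm_bounded (Real.exp (d*t)/d) t
    (fun i : ℝ => hc.integrableOn_Ioc) tendsto_id ?_
  filter_upwards with y
  have hval : (∫ x in y..t, ‖Real.exp (d*x)‖) = Real.exp (d*t)/d - Real.exp (d*y)/d := by
    have : (∫ x in y..t, ‖Real.exp (d*x)‖) = ∫ x in y..t, Real.exp (d*x) := by
      congr 1; ext x; exact norm_of_nonneg (Real.exp_pos _).le
    rw [this]
    exact intervalIntegral.integral_eq_sub_of_hasDerivAt
      (fun x _ => hasDerivAt_expMul d hd.ne' x) (hc.intervalIntegrable y t)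
  rw [id_eq, hval]
  have : 0 ≤ Real.exp (d*y)/d := by positivity
  linarith

lemma integral_exp_mul_Iic' {d : ℝ} (hd : 0 < d) (t : ℝ) :
    ∫ y in Iic t, Real.exp (d * y) = Real.exp (d * t) / d := by
  have htend : Tendsto (fun y : ℝ => Real.exp (d * y) / d) atBot (𝓝 0) := by
    have h1 : Tendsto (fun y : ℝ => d * y) atBot atBot := by
      exact (tendsto_const_mul_atBot_of_pos hd).mpr tendsto_id
    simpa using (Real.tendsto_exp_atBot.comp h1).div_const d
  have := integral_Iic_of_hasDerivAt_of_tendsto' (a := t)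
    (fun x _ => hasDerivAt_expMul d hd.ne' x) (exp_mul_integrableOn_Iic hd t) htend
  simpa using this

lemma exp_neg_mul_integrableOn_Ioi {d : ℝ} (hd : 0 < d) (t : ℝ) :
    IntegrableOn (fun y : ℝ => Real.exp (-(d * y))) (Ioi t) := by
  simpa [neg_mul] using exp_neg_integrableOn_Ioi t hd

lemma integral_exp_neg_mul_Ioi {d : ℝ} (hd : 0 < d) (t : ℝ) :
    ∫ y in Ioi t, Real.exp (-(d * y)) = Real.exp (-(d * t)) / d := by
  have hder : ∀ x ∈ Ici t,
      HasDerivAt (fun y : ℝ => -(Real.exp (-(d * y)) / d)) (Real.exp (-(d * x))) x := by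
    intro x _
    have h := hasDerivAt_expMul (-d) (neg_ne_zero.mpr hd.ne') x
    simpa [neg_mul, div_neg] using h
  have htend : Tendsto (fun y : ℝ => -(Real.exp (-(d * y)) / d)) atTop (𝓝 0) := by
    have h1 : Tendsto (fun y : ℝ => -(d * y)) atTop atBot := by
      have := (tendsto_const_mul_atTop_of_pos hd).mpr (tendsto_id (α := ℝ))
      exact tendsto_neg_atTop_atBot.comp this
    simpa using ((Real.tendsto_exp_atBot.comp h1).div_const d).neg
  have := integral_Ioi_of_hasDerivAt_of_tendsto' hder (exp_neg_mul_integrableOn_Ioi hd t) htend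
  simpa using this

set_option maxHeartbeats 2000000 in
/-- Uniformly bounded displacement of the monotone transport map from
m = e^{-V} to f ∈ P_{c,C}, for convex, Lipschitz, C¹ potentials V. -/
theorem transport_map_bounded_displacement
    (V : ℝ → ℝ) (L : NNReal)
    (hVconv : ConvexOn ℝ Set.univ V)
    (hVlip : LipschitzWith L V)
    (hVC1 : ContDiff ℝ 1 V)
    (m : ℝ → ℝ) (hm : m = fun x => Real.exp (-V x))
    (hm_int : Integrable m) (hmass : ∫ x, m x = 1)
    (c C : ℝ) (hc : 0 < c) (hcC : c < C)
    (f : ℝ → ℝ) (hfcont : Continuous f) (hfpos : ∀ x, 0 < f x)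
    (hf_int : Integrable f) (hfprob : ∫ x, f x = 1)
    (hfbounds : ∀ x : ℝ, c * m x ≤ f x ∧ f x ≤ C * m x)
    (T : ℝ → ℝ) (hTmono : StrictMono T)
    (hTtransport : ∀ x : ℝ, (∫ y in Set.Iic (T x), f y) = ∫ y in Set.Iic x, m y) :
    ∃ A > (0:ℝ), ∀ x : ℝ, |T x - x| ≤ A := by
  -- basic facts about m
  have hmpos : ∀ x, 0 < m x := by intro x; rw [hm]; exact Real.exp_pos _
  have hCpos : 0 < C := lt_trans hc hcC
  have hVdiff : Differentiable ℝ V := hVC1.differentiable one_ne_zero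
  have hd_mono : Monotone (deriv V) :=
    monotoneOn_univ.mp (hVconv.monotoneOn_deriv (fun x _ => hVdiff x))
  -- gradient inequality
  have hgrad : ∀ w y : ℝ, V w + deriv V w * (y - w) ≤ V y := by
    intro w y
    rcases lt_trichotomy y w with h | h | h
    · have hs := hVconv.slope_le_deriv (mem_univ y) (mem_univ w) h (hVdiff w)
      rw [slope_def_field] at hs
      have h2 := (div_le_iff₀ (by linarith : (0:ℝ) < w - y)).mp hs
      nlinarith
    · subst h; simp
    · have hs := hVconv.deriv_le_slope (mem_univ w) (mem_univ y) h (hVdiff w)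
      rw [slope_def_field] at hs
      have h2 := (le_div_iff₀ (by linarith : (0:ℝ) < y - w)).mp hs
      nlinarith
  -- existence of points with negative / positive derivative
  have hxplus : ∃ z : ℝ, 0 < deriv V z := by
    by_contra hcon
    push_neg at hcon
    have hanti : Antitone V := antitone_of_deriv_nonpos hVdiff hcon
    have hsub : Ici (0:ℝ) ⊆ {x | Real.exp (-V 0) ≤ m x} := by
      intro x hx
      have : V x ≤ V 0 := hanti hx.out
      rw [hm]
      simpa using Real.exp_le_exp.mpr (by linarith)
    have hfin := hm_int.measure_ge_lt_top (Real.exp_pos (-V 0))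
    have := measure_mono (μ := (volume : Measure ℝ)) hsub
    rw [Real.volume_Ici] at this
    exact absurd (lt_of_le_of_lt this hfin) (by simp)
  have hxminus : ∃ z : ℝ, deriv V z < 0 := by
    by_contra hcon
    push_neg at hcon
    have hmono : Monotone V := monotone_of_deriv_nonneg hVdiff hcon
    have hsub : Iic (0:ℝ) ⊆ {x | Real.exp (-V 0) ≤ m x} := by
      intro x hx
      have : V x ≤ V 0 := hmono hx.out
      rw [hm]
      simpa using Real.exp_le_exp.mpr (by linarith)
    have hfin := hm_int.measure_ge_lt_top (Real.exp_pos (-V 0))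
    have := measure_mono (μ := (volume : Measure ℝ)) hsub
    rw [Real.volume_Iic] at this
    exact absurd (lt_of_le_of_lt this hfin) (by simp)
  obtain ⟨xm, hxm⟩ := hxminus
  obtain ⟨xp, hxp⟩ := hxplus
  have hxmp : xm < xp := by
    by_contra hle
    push_neg at hle
    exact absurd (lt_of_le_of_lt (hd_mono hle) hxm) (asymm hxp)
  obtain ⟨δ, hδdef⟩ : ∃ δ : ℝ, δ = min (-deriv V xm) (deriv V xp) := ⟨_, rfl⟩
  have hδ : 0 < δ := by rw [hδdef]; exact lt_min (by linarith) hxp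
  obtain ⟨B, hBdef⟩ : ∃ B : ℝ, B = xp - xm := ⟨_, rfl⟩
  have hB : 0 < B := by simp only [hBdef]; linarith
  have hδ2 : δ ≤ deriv V xp := by rw [hδdef]; exact min_le_right _ _
  have hslope_right : ∀ w, xp ≤ w → δ ≤ deriv V w :=
    fun w hw => le_trans hδ2 (hd_mono hw)
  have hslope_left : ∀ w, w ≤ xm → deriv V w ≤ -δ := by
    intro w hw
    have h1 : δ ≤ -deriv V xm := by rw [hδdef]; exact min_le_left _ _
    have := hd_mono hw
    linarith
  -- pointwise density bounds
  have hmub_right : ∀ w y : ℝ, xp ≤ w → w ≤ y →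
      m y ≤ m w * Real.exp (-(δ * (y - w))) := by
    intro w y hw hwy
    rw [hm]
    simp only
    rw [← Real.exp_add]
    apply Real.exp_le_exp.mpr
    nlinarith [hgrad w y, mul_le_mul_of_nonneg_right (hslope_right w hw) (sub_nonneg.mpr hwy)]
  have hmub_left : ∀ w y : ℝ, w ≤ xm → y ≤ w →
      m y ≤ m w * Real.exp (-(δ * (w - y))) := by
    intro w y hw hyw
    rw [hm]
    simp only
    rw [← Real.exp_add]
    apply Real.exp_le_exp.mpr
    nlinarith [hgrad w y, mul_le_mul_of_nonpos_right (hslope_left w hw) (by linarith : y - w ≤ 0)]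
  -- Lipschitz lower bound near a point
  obtain ⟨EL, hELdef⟩ : ∃ EL : ℝ, EL = Real.exp (-(L:ℝ)) := ⟨_, rfl⟩
  have hELpos : 0 < EL := by rw [hELdef]; exact Real.exp_pos _
  have hm_near : ∀ w y : ℝ, |y - w| ≤ 1 → m w * EL ≤ m y := by
    intro w y hy
    have hd := hVlip.dist_le_mul y w
    rw [Real.dist_eq, Real.dist_eq] at hd
    have hL1 : |V y - V w| ≤ (L:ℝ) := by
      calc |V y - V w| ≤ (L:ℝ) * |y - w| := hd
      _ ≤ (L:ℝ) * 1 := by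
          exact mul_le_mul_of_nonneg_left hy (L.coe_nonneg)
      _ = (L:ℝ) := mul_one _
    have h1 : V y ≤ V w + (L:ℝ) := by
      have := abs_le.mp hL1
      linarith [this.2]
    rw [hm, hELdef]
    simp only
    rw [← Real.exp_add]
    apply Real.exp_le_exp.mpr
    linarith
  -- CDF facts
  have hFnn : ∀ a : ℝ, 0 ≤ ∫ y in Iic a, m y :=
    fun a => setIntegral_nonneg measurableSet_Iic (fun y _ => (hmpos y).le)
  have hGnn : ∀ a : ℝ, 0 ≤ ∫ y in Ioi a, m y :=
    fun a => setIntegral_nonneg measurableSet_Ioi (fun y _ => (hmpos y).le)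
  have hFG : ∀ a : ℝ, (∫ y in Iic a, m y) + (∫ y in Ioi a, m y) = 1 := by
    intro a
    have h := integral_add_compl (measurableSet_Iic (a := a)) hm_int
    rw [compl_Iic, hmass] at h
    exact h
  have hPQ : ∀ a : ℝ, (∫ y in Iic a, f y) + (∫ y in Ioi a, f y) = 1 := by
    intro a
    have h := integral_add_compl (measurableSet_Iic (a := a)) hf_int
    rw [compl_Iic, hfprob] at h
    exact h
  have hFmono : ∀ a b : ℝ, a ≤ b → (∫ y in Iic a, m y) ≤ ∫ y in Iic b, m y := by
    intro a b hab
    exact setIntegral_mono_set hm_int.integrableOn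
      (ae_of_all _ fun y => (hmpos y).le)
      (HasSubset.Subset.eventuallyLE (Iic_subset_Iic.mpr hab))
  have hGmono : ∀ a b : ℝ, a ≤ b → (∫ y in Ioi b, m y) ≤ ∫ y in Ioi a, m y := by
    intro a b hab
    exact setIntegral_mono_set hm_int.integrableOn
      (ae_of_all _ fun y => (hmpos y).le)
      (HasSubset.Subset.eventuallyLE (Ioi_subset_Ioi hab))
  have hIoc : ∀ a b : ℝ, a ≤ b →
      (∫ y in Iic b, m y) = (∫ y in Iic a, m y) + ∫ y in Ioc a b, m y := by
    intro a b hab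
    rw [← setIntegral_union (Iic_disjoint_Ioc le_rfl) measurableSet_Ioc
      hm_int.integrableOn hm_int.integrableOn, Iic_union_Ioc_eq_Iic hab]
  have hGIoc : ∀ a b : ℝ, a ≤ b →
      (∫ y in Ioi a, m y) = (∫ y in Ioi b, m y) + ∫ y in Ioc a b, m y := by
    intro a b hab
    have h1 := hFG a
    have h2 := hFG b
    have h3 := hIoc a b hab
    linarith
  have hInn : ∀ a b : ℝ, 0 ≤ ∫ y in Ioc a b, m y :=
    fun a b => setIntegral_nonneg measurableSet_Ioc (fun y _ => (hmpos y).le)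
  -- comparison of f-integrals with m-integrals
  have hPlow : ∀ a : ℝ, c * (∫ y in Iic a, m y) ≤ ∫ y in Iic a, f y := by
    intro a
    rw [← integral_const_mul]
    exact setIntegral_mono ((hm_int.const_mul c).integrableOn) hf_int.integrableOn
      (fun y => (hfbounds y).1)
  have hPhigh : ∀ a : ℝ, (∫ y in Iic a, f y) ≤ C * ∫ y in Iic a, m y := by
    intro a
    rw [← integral_const_mul]
    exact setIntegral_mono hf_int.integrableOn ((hm_int.const_mul C).integrableOn)
      (fun y => (hfbounds y).2)
  have hQlow : ∀ a : ℝ, c * (∫ y in Ioi a, m y) ≤ ∫ y in Ioi a, f y := by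
    intro a
    rw [← integral_const_mul]
    exact setIntegral_mono ((hm_int.const_mul c).integrableOn) hf_int.integrableOn
      (fun y => (hfbounds y).1)
  have hQhigh : ∀ a : ℝ, (∫ y in Ioi a, f y) ≤ C * ∫ y in Ioi a, m y := by
    intro a
    rw [← integral_const_mul]
    exact setIntegral_mono hf_int.integrableOn ((hm_int.const_mul C).integrableOn)
      (fun y => (hfbounds y).2)
  -- unit interval lower bound
  have hunit : ∀ a b w p : ℝ, a ≤ p → p + 1 ≤ b → p ≤ w → w ≤ p + 1 →
      m w * EL ≤ ∫ y in Ioc a b, m y := by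
    intro a b w p hap hpb hpw hwp
    have hsub : Ioc p (p+1) ⊆ Ioc a b := Ioc_subset_Ioc hap hpb
    have hvol : (volume (Ioc p (p+1))) < ⊤ := by
      rw [Real.volume_Ioc]
      exact ENNReal.ofReal_lt_top
    have hconst : (∫ (_ : ℝ) in Ioc p (p+1), m w * EL) = m w * EL := by
      rw [setIntegral_const, Real.volume_real_Ioc]
      norm_num
    have h1 : (∫ (_ : ℝ) in Ioc p (p+1), m w * EL) ≤ ∫ y in Ioc p (p+1), m y := by
      apply setIntegral_mono_on ((integrableOn_const_iff).mpr (Or.inr hvol))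
        hm_int.integrableOn measurableSet_Ioc
      intro y hy
      apply hm_near
      rw [abs_le]
      constructor
      · linarith [hy.1, hwp]
      · linarith [hy.2, hpw]
    have h2 : (∫ y in Ioc p (p+1), m y) ≤ ∫ y in Ioc a b, m y :=
      setIntegral_mono_set hm_int.integrableOn (ae_of_all _ fun y => (hmpos y).le)
        (HasSubset.Subset.eventuallyLE hsub)
    linarith [hconst ▸ h1]
  -- tail bounds
  have htailG : ∀ w t : ℝ, xp ≤ w → w ≤ t →
      (∫ y in Ioi t, m y) ≤ m w / δ * Real.exp (-(δ * (t - w))) := by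
    intro w t hw hwt
    have hpt : ∀ y ∈ Ioi t, m y ≤ m w * Real.exp (δ * w) * Real.exp (-(δ * y)) := by
      intro y hy
      have h1 := hmub_right w y hw (le_trans hwt (le_of_lt hy))
      have h2 : Real.exp (δ * w) * Real.exp (-(δ * y)) = Real.exp (-(δ * (y - w))) := by
        rw [← Real.exp_add]; congr 1; ring
      rw [mul_assoc, h2]; exact h1
    have hint : IntegrableOn (fun y : ℝ => m w * Real.exp (δ * w) * Real.exp (-(δ * y))) (Ioi t) :=
      (exp_neg_mul_integrableOn_Ioi hδ t).const_mul _
    have h3 := setIntegral_mono_on hm_int.integrableOn hint measurableSet_Ioi hpt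
    have h4 : (∫ y in Ioi t, m w * Real.exp (δ * w) * Real.exp (-(δ * y)))
        = m w * Real.exp (δ * w) * (Real.exp (-(δ * t)) / δ) := by
      rw [integral_const_mul, integral_exp_neg_mul_Ioi hδ]
    have he : Real.exp (δ * w) * Real.exp (-(δ * t)) = Real.exp (-(δ * (t - w))) := by
      rw [← Real.exp_add]; congr 1; ring
    have h5 : m w * Real.exp (δ * w) * (Real.exp (-(δ * t)) / δ)
        = m w / δ * Real.exp (-(δ * (t - w))) := by
      rw [← he]; ring
    calc (∫ y in Ioi t, m y) ≤ _ := h3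
      _ = _ := h4.trans h5
  have htailF : ∀ w t : ℝ, w ≤ xm → t ≤ w →
      (∫ y in Iic t, m y) ≤ m w / δ * Real.exp (-(δ * (w - t))) := by
    intro w t hw htw
    have hpt : ∀ y ∈ Iic t, m y ≤ m w * Real.exp (-(δ * w)) * Real.exp (δ * y) := by
      intro y hy
      have h1 := hmub_left w y hw (le_trans hy.out htw)
      have h2 : Real.exp (-(δ * w)) * Real.exp (δ * y) = Real.exp (-(δ * (w - y))) := by
        rw [← Real.exp_add]; congr 1; ring
      rw [mul_assoc, h2]; exact h1
    have hint : IntegrableOn (fun y : ℝ => m w * Real.exp (-(δ * w)) * Real.exp (δ * y)) (Iic t) :=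
      (exp_mul_integrableOn_Iic hδ t).const_mul _
    have h3 := setIntegral_mono_on hm_int.integrableOn hint measurableSet_Iic hpt
    have h4 : (∫ y in Iic t, m w * Real.exp (-(δ * w)) * Real.exp (δ * y))
        = m w * Real.exp (-(δ * w)) * (Real.exp (δ * t) / δ) := by
      rw [integral_const_mul, integral_exp_mul_Iic' hδ]
    have he : Real.exp (-(δ * w)) * Real.exp (δ * t) = Real.exp (-(δ * (w - t))) := by
      rw [← Real.exp_add]; congr 1; ring
    have h5 : m w * Real.exp (-(δ * w)) * (Real.exp (δ * t) / δ)
        = m w / δ * Real.exp (-(δ * (w - t))) := by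
      rw [← he]; ring
    calc (∫ y in Iic t, m y) ≤ _ := h3
      _ = _ := h4.trans h5
  -- constants
  obtain ⟨κ, hκdef⟩ : ∃ κ : ℝ, κ = min c (1/C) := ⟨_, rfl⟩
  have hκpos : 0 < κ := by rw [hκdef]; exact lt_min hc (by positivity)
  have hκc : κ ≤ c := by rw [hκdef]; exact min_le_left _ _
  have hκC : κ ≤ 1/C := by rw [hκdef]; exact min_le_right _ _
  have hCκ : C * κ ≤ 1 := by
    have h := mul_le_mul_of_nonneg_left hκC hCpos.le
    rwa [mul_one_div, div_self hCpos.ne'] at h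
  obtain ⟨u0, hu0def⟩ : ∃ u0 : ℝ, u0 = Real.log (1/(κ * δ * EL)) := ⟨_, rfl⟩
  obtain ⟨A, hAdef⟩ : ∃ A : ℝ, A = 2*B + 4 + (2/δ) * (1 + max 0 u0) := ⟨_, rfl⟩
  have hA2B : 2*B + 4 ≤ A := by
    have h : 0 ≤ (2/δ) * (1 + max 0 u0) := by positivity
    simp only [hAdef]; linarith
  have hApos : 0 < A := by linarith [hB]
  have hexpA : Real.exp (-(δ * (A/2 - B))) < κ * δ * EL := by
    have hpos : 0 < κ * δ * EL := by positivity
    have hlog : Real.log (κ * δ * EL) = -u0 := by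
      rw [hu0def, one_div, Real.log_inv, neg_neg]
    have hval : δ * (A/2 - B) = 2*δ + (1 + max 0 u0) := by
      rw [hAdef]; field_simp; ring
    have h1 : -(δ * (A/2 - B)) < Real.log (κ * δ * EL) := by
      rw [hlog, hval]
      rcases le_or_gt 0 u0 with h | h
      · rw [max_eq_right h]; linarith [hδ]
      · rw [max_eq_left h.le]; linarith [hδ]
    calc Real.exp (-(δ * (A/2 - B))) < Real.exp (Real.log (κ * δ * EL)) :=
          Real.exp_lt_exp.mpr h1
      _ = κ * δ * EL := Real.exp_log hpos
  -- the key estimate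
  have key : ∀ z : ℝ, κ * (∫ y in Ioc z (z+A), m y) ≤ (∫ y in Iic z, m y) →
      κ * (∫ y in Ioc z (z+A), m y) ≤ (∫ y in Ioi (z+A), m y) → False := by
    intro z hF1 hG1
    have final : ∀ w g : ℝ, m w * EL ≤ (∫ y in Ioc z (z+A), m y) →
        κ * (∫ y in Ioc z (z+A), m y) ≤ m w / δ * Real.exp (-(δ * g)) →
        A/2 - B ≤ g → False := by
      intro w g hIw hle hg
      have hmw := hmpos w
      have h1 : κ * (m w * EL) ≤ m w * Real.exp (-(δ * g)) / δ := by
        have := mul_le_mul_of_nonneg_left hIw hκpos.le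
        rw [div_mul_eq_mul_div] at hle
        linarith
      have h1' := (le_div_iff₀ hδ).mp h1
      have h2 : κ * δ * EL ≤ Real.exp (-(δ * g)) := by
        refine (mul_le_mul_iff_right₀ hmw).mp ?_
        nlinarith [h1']
      have h5 : Real.exp (-(δ * g)) ≤ Real.exp (-(δ * (A/2 - B))) :=
        Real.exp_le_exp.mpr (by nlinarith [hδ])
      linarith [hexpA]
    by_cases hcase : xm ≤ z
    · -- right region
      have hw1 : z ≤ max z xp := le_max_left _ _
      have hw2 : xp ≤ max z xp := le_max_right _ _
      have hwB : max z xp ≤ z + B := by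
        apply max_le (by linarith [hB])
        linarith [hBdef]
      have hIw : m (max z xp) * EL ≤ ∫ y in Ioc z (z+A), m y :=
        hunit z (z+A) (max z xp) (max z xp) hw1 (by linarith) le_rfl (by linarith)
      have htail := htailG (max z xp) (z+A) hw2 (by linarith)
      exact final (max z xp) (z + A - (max z xp)) hIw (le_trans hG1 htail) (by linarith)
    · by_cases hcase2 : xp + A/2 ≤ z + A
      · -- middle-left region, right tail
        push_neg at hcase
        have hIw : m xp * EL ≤ ∫ y in Ioc z (z+A), m y :=
          hunit z (z+A) xp xp (by linarith [hBdef]) (by linarith) le_rfl (by linarith)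
        have htail := htailG xp (z+A) le_rfl (by linarith)
        exact final xp (z + A - xp) hIw (le_trans hG1 htail) (by linarith [hB])
      · -- far left region, left tail
        push_neg at hcase hcase2
        have hw1 : min (z+A) xm ≤ xm := min_le_right _ _
        have hw2 : min (z+A) xm ≤ z + A := min_le_left _ _
        have hgap : A/2 - B ≤ min (z+A) xm - z := by
          have h1 : A/2 - B + z ≤ min (z+A) xm := by
            apply le_min
            · linarith [hB]
            · linarith [hBdef]
          linarith
        have hx1w : z + 1 ≤ min (z+A) xm := by linarith [hgap, hA2B, hB]
        have hIw : m (min (z+A) xm) * EL ≤ ∫ y in Ioc z (z+A), m y :=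
          hunit z (z+A) (min (z+A) xm) (min (z+A) xm - 1) (by linarith) (by linarith)
            (by linarith) (by linarith)
        have htail := htailF (min (z+A) xm) z hw1 (by linarith)
        exact final (min (z+A) xm) (min (z+A) xm - z) hIw (le_trans hF1 htail) hgap
  -- conclusion
  refine ⟨A, hApos, fun x => ?_⟩
  rw [abs_sub_le_iff]
  constructor
  · by_contra hcon
    push_neg at hcon
    have hTx : x + A ≤ T x := by linarith
    have hPhi : (∫ y in Iic (T x), f y) = ∫ y in Iic x, m y := hTtransport x
    have h1 : c * (∫ y in Iic (x+A), m y) ≤ ∫ y in Iic x, m y := by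
      calc c * (∫ y in Iic (x+A), m y) ≤ c * (∫ y in Iic (T x), m y) :=
            mul_le_mul_of_nonneg_left (hFmono _ _ hTx) hc.le
        _ ≤ ∫ y in Iic (T x), f y := hPlow _
        _ = ∫ y in Iic x, m y := hPhi
    have h2 : (∫ y in Ioi x, m y) ≤ C * ∫ y in Ioi (x+A), m y := by
      have hGx : (∫ y in Ioi x, m y) = ∫ y in Ioi (T x), f y := by
        have ha := hPQ (T x)
        have hb := hFG x
        linarith [hPhi]
      calc (∫ y in Ioi x, m y) = ∫ y in Ioi (T x), f y := hGx
        _ ≤ C * ∫ y in Ioi (T x), m y := hQhigh _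
        _ ≤ C * ∫ y in Ioi (x+A), m y :=
            mul_le_mul_of_nonneg_left (hGmono _ _ hTx) hCpos.le
    have hIocx := hIoc x (x+A) (by linarith)
    have hGIocx := hGIoc x (x+A) (by linarith)
    rw [hIocx] at h1
    rw [hGIocx] at h2
    apply key x
    · have hF := hFnn x
      have hI := hInn x (x+A)
      have hcI : κ * (∫ y in Ioc x (x+A), m y) ≤ c * (∫ y in Ioc x (x+A), m y) :=
        mul_le_mul_of_nonneg_right hκc hI
      nlinarith [mul_nonneg hc.le hF]
    · have hG := hGnn (x+A)
      have hI := hInn x (x+A)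
      have h3 : C * κ * (∫ y in Ioc x (x+A), m y) ≤ 1 * (∫ y in Ioc x (x+A), m y) :=
        mul_le_mul_of_nonneg_right hCκ hI
      refine (mul_le_mul_iff_right₀ hCpos).mp ?_
      nlinarith [h3]
  · by_contra hcon
    push_neg at hcon
    have hTx : T x ≤ x - A := by linarith
    have hPhi : (∫ y in Iic (T x), f y) = ∫ y in Iic x, m y := hTtransport x
    have h1 : (∫ y in Iic x, m y) ≤ C * ∫ y in Iic (x-A), m y := by
      calc (∫ y in Iic x, m y) = ∫ y in Iic (T x), f y := hPhi.symm
        _ ≤ C * ∫ y in Iic (T x), m y := hPhigh _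
        _ ≤ C * ∫ y in Iic (x-A), m y :=
            mul_le_mul_of_nonneg_left (hFmono _ _ hTx) hCpos.le
    have h2 : c * (∫ y in Ioi (x-A), m y) ≤ ∫ y in Ioi x, m y := by
      have hGx : (∫ y in Ioi x, m y) = ∫ y in Ioi (T x), f y := by
        have ha := hPQ (T x)
        have hb := hFG x
        linarith [hPhi]
      calc c * (∫ y in Ioi (x-A), m y) ≤ c * (∫ y in Ioi (T x), m y) :=
            mul_le_mul_of_nonneg_left (hGmono _ _ hTx) hc.le
        _ ≤ ∫ y in Ioi (T x), f y := hQlow _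
        _ = ∫ y in Ioi x, m y := hGx.symm
    have hxa : x - A + A = x := by ring
    have hIocx := hIoc (x-A) x (by linarith)
    have hGIocx := hGIoc (x-A) x (by linarith)
    rw [hIocx] at h1
    rw [hGIocx] at h2
    apply key (x-A) <;> rw [hxa]
    · have hF := hFnn (x-A)
      have hI := hInn (x-A) x
      have h3 : C * κ * (∫ y in Ioc (x-A) x, m y) ≤ 1 * (∫ y in Ioc (x-A) x, m y) :=
        mul_le_mul_of_nonneg_right hCκ hI
      refine (mul_le_mul_iff_right₀ hCpos).mp ?_
      nlinarith [h3]
    · have hG := hGnn x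
      have hI := hInn (x-A) x
      have hcI : κ * (∫ y in Ioc (x-A) x, m y) ≤ c * (∫ y in Ioc (x-A) x, m y) :=
        mul_le_mul_of_nonneg_right hκc hI
      nlinarith [mul_nonneg hc.le (hGnn x)]
end

section
/- Let V : ℝ → ℝ be convex, L-Lipschitz, and continuously differentiable, with m = e^{-V} a continuous probability density on ℝ. Let 0 < c < C and let f be a continuous positive probability density with c·m ≤ f ≤ C·m, and let T = F_f^{-1} ∘ F_m be the monotone transport map from m to f; assume T is continuously differentiable with T'(x) = m(x)/f(T(x)). Then there exist constants 0 < c' < C', depending only on c, C, and V, such that for every α ∈ [0,1] and every x ∈ ℝ: c' · e^{-V((1−α)x + αT(x))} ≤ e^{-V(x)} / ((1−α) + α T'(x)) ≤ C' · e^{-V((1−α)x + αT(x))}. -/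
open MeasureTheory Real Set Filter Topology

private lemma gs13_integral_comp_mul_left_Iic (g : ℝ → ℝ) (a : ℝ) {b : ℝ} (hb : 0 < b) :
    (∫ x in Iic a, g (b * x)) = b⁻¹ • ∫ x in Iic (b * a), g x := by
  have hm : ∀ c : ℝ, MeasurableSet (Iic c) := fun c => measurableSet_Iic
  rw [← integral_indicator (hm a), ← integral_indicator (hm (b * a)),
    ← abs_of_pos (inv_pos.mpr hb), ← MeasureTheory.Measure.integral_comp_mul_left]
  congr 1
  ext1 x
  rw [← Set.indicator_comp_right, show (HMul.hMul b ⁻¹' Iic (b * a)) = Iic a from by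
    ext y; simp only [mem_preimage, mem_Iic]; exact mul_le_mul_iff_right₀ hb]
  rfl

private lemma gs13_integrableOn_exp_mul_Iic {τ : ℝ} (hτ : 0 < τ) (a : ℝ) :
    IntegrableOn (fun y => exp (τ * y)) (Iic a) := by
  have h0 : Integrable ((Iic (τ * a)).indicator exp) :=
    (integrable_indicator_iff measurableSet_Iic).2 (integrableOn_exp_Iic _)
  have h1 : Integrable (fun y => (Iic (τ * a)).indicator exp (τ * y)) := h0.comp_mul_left' hτ.ne'
  have h2 : (fun y => (Iic (τ * a)).indicator exp (τ * y))
      = (Iic a).indicator (fun y => exp (τ * y)) := by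
    funext y
    by_cases h : y ≤ a
    · rw [Set.indicator_of_mem (mem_Iic.2 ((mul_le_mul_iff_right₀ hτ).2 h)),
        Set.indicator_of_mem (mem_Iic.2 h)]
    · rw [Set.indicator_of_notMem (fun hc => h (le_of_mul_le_mul_left (mem_Iic.1 hc) hτ)),
        Set.indicator_of_notMem (fun hc => h (mem_Iic.1 hc))]
  rw [h2] at h1
  exact (integrable_indicator_iff measurableSet_Iic).1 h1

private lemma gs13_integral_exp_mul_Iic {τ : ℝ} (hτ : 0 < τ) (a : ℝ) :
    ∫ y in Iic a, exp (τ * y) = exp (τ * a) / τ := by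
  rw [gs13_integral_comp_mul_left_Iic exp a hτ, integral_exp_Iic, smul_eq_mul, inv_mul_eq_div]

private lemma gs13_integral_exp_neg_mul_Ioi {τ : ℝ} (hτ : 0 < τ) (a : ℝ) :
    ∫ y in Ioi a, exp (-(τ * y)) = exp (-(τ * a)) / τ := by
  have h := integral_comp_mul_left_Ioi (fun u => exp (-u)) a hτ
  rw [h, integral_exp_neg_Ioi, smul_eq_mul, inv_mul_eq_div]

private lemma gs13_tail_left {V : ℝ → ℝ} {p τ : ℝ} (hτ : 0 < τ)
    (hmint : IntegrableOn (fun y => exp (-V y)) (Iic p))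
    (hslope : ∀ y, y ≤ p → V p + τ * (p - y) ≤ V y) :
    ∫ y in Iic p, exp (-V y) ≤ exp (-V p) / τ := by
  set K := exp (-V p) * exp (-(τ * p)) with hK
  have hint2 : IntegrableOn (fun y => K * exp (τ * y)) (Iic p) :=
    (gs13_integrableOn_exp_mul_Iic hτ p).const_mul K
  have hmono : ∀ y ∈ Iic p, exp (-V y) ≤ K * exp (τ * y) := by
    intro y hy
    have h1 := hslope y (mem_Iic.1 hy)
    rw [hK, ← exp_add, ← exp_add]
    exact exp_le_exp.2 (by linarith)
  calc ∫ y in Iic p, exp (-V y) ≤ ∫ y in Iic p, K * exp (τ * y) :=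
        setIntegral_mono_on hmint hint2 measurableSet_Iic hmono
    _ = K * (exp (τ * p) / τ) := by rw [integral_const_mul, gs13_integral_exp_mul_Iic hτ p]
    _ = exp (-V p) / τ := by
        rw [hK, show exp (-V p) * exp (-(τ * p)) * (exp (τ * p) / τ)
            = exp (-V p) * (exp (-(τ * p)) * exp (τ * p)) / τ from by ring,
          ← exp_add, show -(τ * p) + τ * p = 0 by ring, exp_zero, mul_one]

private lemma gs13_tail_right {V : ℝ → ℝ} {q τ : ℝ} (hτ : 0 < τ)
    (hmint : IntegrableOn (fun y => exp (-V y)) (Ioi q))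
    (hslope : ∀ y, q ≤ y → V q + τ * (y - q) ≤ V y) :
    ∫ y in Ioi q, exp (-V y) ≤ exp (-V q) / τ := by
  set K := exp (-V q) * exp (τ * q) with hK
  have hint0 : IntegrableOn (fun y => exp (-(τ * y))) (Ioi q) := by
    have := exp_neg_integrableOn_Ioi q hτ
    simpa [neg_mul] using this
  have hint2 : IntegrableOn (fun y => K * exp (-(τ * y))) (Ioi q) := hint0.const_mul K
  have hmono : ∀ y ∈ Ioi q, exp (-V y) ≤ K * exp (-(τ * y)) := by
    intro y hy
    have h1 := hslope y (le_of_lt (mem_Ioi.1 hy))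
    rw [hK, ← exp_add, ← exp_add]
    exact exp_le_exp.2 (by linarith)
  calc ∫ y in Ioi q, exp (-V y) ≤ ∫ y in Ioi q, K * exp (-(τ * y)) :=
        setIntegral_mono_on hmint hint2 measurableSet_Ioi hmono
    _ = K * (exp (-(τ * q)) / τ) := by rw [integral_const_mul, gs13_integral_exp_neg_mul_Ioi hτ q]
    _ = exp (-V q) / τ := by
        rw [hK, show exp (-V q) * exp (τ * q) * (exp (-(τ * q)) / τ)
            = exp (-V q) * (exp (τ * q) * exp (-(τ * q))) / τ from by ring,
          ← exp_add, show τ * q + -(τ * q) = 0 by ring, exp_zero, mul_one]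

private lemma gs13_seg_lower {V : ℝ → ℝ} (hVconv : ConvexOn ℝ Set.univ V) {p q : ℝ} (hpq : p ≤ q)
    (hmint : IntegrableOn (fun y => exp (-V y)) (Ioc p q)) :
    (q - p) * exp (-(max (V p) (V q))) ≤ ∫ y in Ioc p q, exp (-V y) := by
  have hptwise : ∀ y ∈ Ioc p q, exp (-(max (V p) (V q))) ≤ exp (-V y) := by
    intro y hy
    refine exp_le_exp.2 (neg_le_neg ?_)
    refine hVconv.le_on_segment (mem_univ p) (mem_univ q) ?_
    rw [segment_eq_uIcc]
    exact Icc_subset_uIcc (Ioc_subset_Icc_self hy)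
  have hcint : IntegrableOn (fun _ : ℝ => exp (-(max (V p) (V q)))) (Ioc p q) :=
    integrableOn_const (by rw [Real.volume_Ioc]; exact ENNReal.ofReal_ne_top)
  have h1 := setIntegral_mono_on hcint hmint measurableSet_Ioc hptwise
  rwa [setIntegral_const, measureReal_def, Real.volume_Ioc, ENNReal.toReal_ofReal (by linarith), smul_eq_mul] at h1


/-- The W₂-geodesic between m = e^{-V} and f ∈ P_{c,C} stays in
P_{c',C'}: uniform two-sided bounds for the density of the displacement interpolation. -/
theorem geodesic_stays_in_sandwich_class
    (V : ℝ → ℝ) (L : NNReal)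
    (hVconv : ConvexOn ℝ Set.univ V)
    (hVlip : LipschitzWith L V)
    (hVC1 : ContDiff ℝ 1 V)
    (m : ℝ → ℝ) (hm : m = fun x => Real.exp (-V x))
    (hm_int : Integrable m) (hmass : ∫ x, m x = 1)
    (c C : ℝ) (hc : 0 < c) (hcC : c < C)
    (f : ℝ → ℝ) (hfcont : Continuous f) (hfpos : ∀ x, 0 < f x)
    (hf_int : Integrable f) (hfprob : ∫ x, f x = 1)
    (hfbounds : ∀ x : ℝ, c * m x ≤ f x ∧ f x ≤ C * m x)
    (T : ℝ → ℝ) (hTmono : StrictMono T)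
    (hTtransport : ∀ x : ℝ, (∫ y in Set.Iic (T x), f y) = ∫ y in Set.Iic x, m y)
    (hTC1 : ContDiff ℝ 1 T)
    (hMA : ∀ x : ℝ, deriv T x = m x / f (T x)) :
    ∃ c' C' : ℝ, 0 < c' ∧ c' < C' ∧
      ∀ α ∈ Set.Icc (0:ℝ) 1, ∀ x : ℝ,
        c' * Real.exp (-V ((1 - α) * x + α * T x)) ≤
            Real.exp (-V x) / ((1 - α) + α * deriv T x) ∧
        Real.exp (-V x) / ((1 - α) + α * deriv T x) ≤
            C' * Real.exp (-V ((1 - α) * x + α * T x)) := by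
  subst hm
  have hC0 : (0:ℝ) < C := lt_trans hc hcC
  have hmass' : ∫ y, exp (-V y) = (1:ℝ) := hmass
  have hm_int' : Integrable (fun y => exp (-V y)) := hm_int
  have hmIntOn : ∀ s : Set ℝ, IntegrableOn (fun y => exp (-V y)) s :=
    fun s => hm_int'.integrableOn
  have hfIntOn : ∀ s : Set ℝ, IntegrableOn f s := fun s => hf_int.integrableOn
  have hfb1 : ∀ y, c * exp (-V y) ≤ f y := fun y => (hfbounds y).1
  have hfb2 : ∀ y, f y ≤ C * exp (-V y) := fun y => (hfbounds y).2
  -- c ≤ 1 and 1 ≤ C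
  have hc1 : c ≤ 1 := by
    have h1 : (∫ y, c * exp (-V y)) ≤ ∫ y, f y :=
      integral_mono (hm_int'.const_mul c) hf_int hfb1
    rw [integral_const_mul, hmass', mul_one, hfprob] at h1
    exact h1
  have hC1 : 1 ≤ C := by
    have h1 : (∫ y, f y) ≤ ∫ y, C * exp (-V y) :=
      integral_mono hf_int (hm_int'.const_mul C) hfb2
    rw [integral_const_mul, hmass', mul_one, hfprob] at h1
    exact h1
  set A := (1 - c) / c with hAdef
  set B := C - 1 with hBdef
  have hA : 0 ≤ A := div_nonneg (by linarith) hc.le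
  have hB : 0 ≤ B := by rw [hBdef]; linarith
  -- transport identities
  have hIic : ∀ x : ℝ, (∫ y in Iic (T x), f y) = ∫ y in Iic x, exp (-V y) := hTtransport
  have hIoi : ∀ x : ℝ, (∫ y in Ioi (T x), f y) = ∫ y in Ioi x, exp (-V y) := by
    intro x
    have h1 := intervalIntegral.integral_Iic_add_Ioi (μ := volume) (b := T x) (hfIntOn _) (hfIntOn _)
    have h2 := intervalIntegral.integral_Iic_add_Ioi (μ := volume) (b := x) (hmIntOn _) (hmIntOn _)
    have h3 : ∫ y, f y = (1:ℝ) := hfprob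
    have h5 := hIic x
    linarith
  -- integrated sandwich bounds
  have hsand_ub : ∀ s : Set ℝ, MeasurableSet s →
      (∫ y in s, f y) ≤ C * ∫ y in s, exp (-V y) := by
    intro s hs
    have h := setIntegral_mono_on (hfIntOn s) ((hm_int'.const_mul C).integrableOn) hs
      (fun y _ => hfb2 y)
    rwa [integral_const_mul] at h
  have hsand_lb : ∀ s : Set ℝ, MeasurableSet s →
      c * (∫ y in s, exp (-V y)) ≤ ∫ y in s, f y := by
    intro s hs
    have h := setIntegral_mono_on ((hm_int'.const_mul c).integrableOn) (hfIntOn s) hs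
      (fun y _ => hfb1 y)
    rwa [integral_const_mul] at h
  -- splitting identities
  have hsplitIic : ∀ {p q : ℝ}, p ≤ q →
      (∫ y in Iic q, exp (-V y))
        = (∫ y in Iic p, exp (-V y)) + ∫ y in Ioc p q, exp (-V y) := by
    intro p q hpq
    rw [← setIntegral_union (Iic_disjoint_Ioc le_rfl) measurableSet_Ioc (hmIntOn _) (hmIntOn _),
      Iic_union_Ioc_eq_Iic hpq]
  have hsplitIoi : ∀ {p q : ℝ}, p ≤ q →
      (∫ y in Ioi p, exp (-V y))
        = (∫ y in Ioc p q, exp (-V y)) + ∫ y in Ioi q, exp (-V y) := by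
    intro p q hpq
    rw [← setIntegral_union (Ioc_disjoint_Ioi le_rfl) measurableSet_Ioi (hmIntOn _) (hmIntOn _),
      Ioc_union_Ioi_eq_Ioi hpq]
  -- KEY BOUND 2 : V (T x) ≤ V x + B
  have K2 : ∀ x : ℝ, V (T x) ≤ V x + B := by
    intro x
    by_contra hcon
    push_neg at hcon
    rcases lt_trichotomy x (T x) with hxu | hxu | hxu
    · set τ := (V (T x) - V x) / (T x - x) with hτdef
      have hux : 0 < T x - x := by linarith
      have hτ : 0 < τ := div_pos (by rw [hBdef] at hcon; linarith) hux
      have hτmul : τ * (T x - x) = V (T x) - V x := by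
        rw [hτdef]; exact div_mul_cancel₀ _ hux.ne'
      have hslope : ∀ y, T x ≤ y → V (T x) + τ * (y - T x) ≤ V y := by
        intro y hy
        rcases eq_or_lt_of_le hy with h | h
        · rw [← h]; simp
        · have hs := hVconv.slope_mono_adjacent (mem_univ x) (mem_univ y) hxu h
          rw [← hτdef] at hs
          have h3 := (le_div_iff₀ (by linarith : (0:ℝ) < y - T x)).1 hs
          linarith
      have htail := gs13_tail_right hτ (hmIntOn _) hslope
      have hseg := gs13_seg_lower hVconv hxu.le (hmIntOn (Ioc x (T x)))
      rw [max_eq_right (by rw [hBdef] at hcon; linarith : V x ≤ V (T x))] at hseg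
      have hcond := hsand_ub (Ioi (T x)) measurableSet_Ioi
      rw [hIoi x, hsplitIoi hxu.le] at hcond
      have hI2 : (∫ y in Ioi (T x), exp (-V y)) * τ ≤ exp (-V (T x)) :=
        (le_div_iff₀ hτ).1 htail
      have hE := exp_pos (-V (T x))
      have step1 : (∫ y in Ioc x (T x), exp (-V y))
          ≤ (C - 1) * ∫ y in Ioi (T x), exp (-V y) := by linarith
      have m0 : (V (T x) - V x) * exp (-V (T x))
          = τ * ((T x - x) * exp (-V (T x))) := by rw [← hτmul]; ring
      have m1 : τ * ((T x - x) * exp (-V (T x))) ≤ τ * ∫ y in Ioc x (T x), exp (-V y) :=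
        mul_le_mul_of_nonneg_left hseg hτ.le
      have m2 : τ * (∫ y in Ioc x (T x), exp (-V y))
          ≤ τ * ((C - 1) * ∫ y in Ioi (T x), exp (-V y)) :=
        mul_le_mul_of_nonneg_left step1 hτ.le
      have m3 : (C - 1) * ((∫ y in Ioi (T x), exp (-V y)) * τ) ≤ (C - 1) * exp (-V (T x)) :=
        mul_le_mul_of_nonneg_left hI2 (by linarith)
      have step2 : (V (T x) - V x) * exp (-V (T x)) ≤ (C - 1) * exp (-V (T x)) := by
        have e4 : τ * ((C - 1) * ∫ y in Ioi (T x), exp (-V y))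
            = (C - 1) * ((∫ y in Ioi (T x), exp (-V y)) * τ) := by ring
        linarith
      have : V (T x) - V x ≤ C - 1 := le_of_mul_le_mul_right step2 hE
      rw [hBdef] at hcon; linarith
    · rw [← hxu] at hcon; linarith
    · set τ := (V (T x) - V x) / (x - T x) with hτdef
      have hux : 0 < x - T x := by linarith
      have hτ : 0 < τ := div_pos (by rw [hBdef] at hcon; linarith) hux
      have hτmul : τ * (x - T x) = V (T x) - V x := by
        rw [hτdef]; exact div_mul_cancel₀ _ hux.ne'
      have hslope : ∀ y, y ≤ T x → V (T x) + τ * (T x - y) ≤ V y := by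
        intro y hy
        rcases eq_or_lt_of_le hy with h | h
        · rw [h]; simp
        · have hs := hVconv.slope_mono_adjacent (mem_univ y) (mem_univ x) h hxu
          have heq : (V x - V (T x)) / (x - T x) = -τ := by rw [hτdef]; ring
          rw [heq] at hs
          have h3 := (div_le_iff₀ (by linarith : (0:ℝ) < T x - y)).1 hs
          linarith
      have htail := gs13_tail_left hτ (hmIntOn _) hslope
      have hseg := gs13_seg_lower hVconv hxu.le (hmIntOn (Ioc (T x) x))
      rw [max_eq_left (by rw [hBdef] at hcon; linarith : V x ≤ V (T x))] at hseg
      have hcond := hsand_ub (Iic (T x)) measurableSet_Iic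
      rw [hIic x, hsplitIic hxu.le] at hcond
      have hI2 : (∫ y in Iic (T x), exp (-V y)) * τ ≤ exp (-V (T x)) :=
        (le_div_iff₀ hτ).1 htail
      have hE := exp_pos (-V (T x))
      have step1 : (∫ y in Ioc (T x) x, exp (-V y))
          ≤ (C - 1) * ∫ y in Iic (T x), exp (-V y) := by linarith
      have m0 : (V (T x) - V x) * exp (-V (T x))
          = τ * ((x - T x) * exp (-V (T x))) := by rw [← hτmul]; ring
      have m1 : τ * ((x - T x) * exp (-V (T x))) ≤ τ * ∫ y in Ioc (T x) x, exp (-V y) :=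
        mul_le_mul_of_nonneg_left hseg hτ.le
      have m2 : τ * (∫ y in Ioc (T x) x, exp (-V y))
          ≤ τ * ((C - 1) * ∫ y in Iic (T x), exp (-V y)) :=
        mul_le_mul_of_nonneg_left step1 hτ.le
      have m3 : (C - 1) * ((∫ y in Iic (T x), exp (-V y)) * τ) ≤ (C - 1) * exp (-V (T x)) :=
        mul_le_mul_of_nonneg_left hI2 (by linarith)
      have step2 : (V (T x) - V x) * exp (-V (T x)) ≤ (C - 1) * exp (-V (T x)) := by
        have e4 : τ * ((C - 1) * ∫ y in Iic (T x), exp (-V y))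
            = (C - 1) * ((∫ y in Iic (T x), exp (-V y)) * τ) := by ring
        linarith
      have : V (T x) - V x ≤ C - 1 := le_of_mul_le_mul_right step2 hE
      rw [hBdef] at hcon; linarith
  -- KEY BOUND 1 : the potential does not dip more than A below V x on the segment
  have K1 : ∀ x y : ℝ, y ∈ segment ℝ x (T x) → V x - A ≤ V y := by
    intro x y hyseg
    by_contra hcon
    push_neg at hcon
    have hyx : V y < V x := by linarith
    have hcA : c * A = 1 - c := by
      rw [hAdef, mul_comm]; exact div_mul_cancel₀ _ hc.ne'
    rcases lt_trichotomy x (T x) with hxu | hxu | hxu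
    · rw [segment_eq_uIcc, uIcc_of_le hxu.le] at hyseg
      obtain ⟨hy1, hy2⟩ := hyseg
      rcases eq_or_lt_of_le hy1 with h | hxy
      · rw [← h] at hyx; exact absurd hyx (lt_irrefl _)
      set τ := (V x - V y) / (y - x) with hτdef
      have hτ : 0 < τ := div_pos (by linarith) (by linarith)
      have hτmul : τ * (y - x) = V x - V y := by
        rw [hτdef]; exact div_mul_cancel₀ _ (sub_pos.2 hxy).ne'
      have hslope : ∀ z, z ≤ x → V x + τ * (x - z) ≤ V z := by
        intro z hz
        rcases eq_or_lt_of_le hz with h | h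
        · rw [h]; simp
        · have hs := hVconv.slope_mono_adjacent (mem_univ z) (mem_univ y) h hxy
          have heq : (V y - V x) / (y - x) = -τ := by rw [hτdef]; ring
          rw [heq] at hs
          have h3 := (div_le_iff₀ (by linarith : (0:ℝ) < x - z)).1 hs
          linarith
      have htail := gs13_tail_left hτ (hmIntOn _) hslope
      have hseg2 := gs13_seg_lower hVconv hxy.le (hmIntOn (Ioc x y))
      rw [max_eq_left hyx.le] at hseg2
      have hsub : (∫ z in Ioc x y, exp (-V z)) ≤ ∫ z in Ioc x (T x), exp (-V z) :=
        setIntegral_mono_set (hmIntOn _) (ae_of_all _ fun z => (exp_pos _).le)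
          (HasSubset.Subset.eventuallyLE (Ioc_subset_Ioc_right hy2))
      have hcond := hsand_lb (Iic (T x)) measurableSet_Iic
      rw [hIic x] at hcond
      rw [hsplitIic hxu.le] at hcond
      have hI0 : (∫ z in Iic x, exp (-V z)) * τ ≤ exp (-V x) := (le_div_iff₀ hτ).1 htail
      have hE := exp_pos (-V x)
      have step1 : c * (∫ z in Ioc x (T x), exp (-V z))
          ≤ (1 - c) * ∫ z in Iic x, exp (-V z) := by linarith
      have m0 : (V x - V y) * exp (-V x) = τ * ((y - x) * exp (-V x)) := by
        rw [← hτmul]; ring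
      have m1 : τ * ((y - x) * exp (-V x)) ≤ τ * ∫ z in Ioc x (T x), exp (-V z) :=
        mul_le_mul_of_nonneg_left (le_trans hseg2 hsub) hτ.le
      have m2 : τ * (c * ∫ z in Ioc x (T x), exp (-V z))
          ≤ τ * ((1 - c) * ∫ z in Iic x, exp (-V z)) :=
        mul_le_mul_of_nonneg_left step1 hτ.le
      have m3 : (1 - c) * ((∫ z in Iic x, exp (-V z)) * τ) ≤ (1 - c) * exp (-V x) :=
        mul_le_mul_of_nonneg_left hI0 (by linarith)
      have m4 : c * ((V x - V y) * exp (-V x)) ≤ (1 - c) * exp (-V x) := by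
        have mm1 : c * ((V x - V y) * exp (-V x))
            ≤ c * (τ * ∫ z in Ioc x (T x), exp (-V z)) := by
          rw [m0]; exact mul_le_mul_of_nonneg_left m1 hc.le
        have e4 : c * (τ * ∫ z in Ioc x (T x), exp (-V z))
            = τ * (c * ∫ z in Ioc x (T x), exp (-V z)) := by ring
        have e5 : τ * ((1 - c) * ∫ z in Iic x, exp (-V z))
            = (1 - c) * ((∫ z in Iic x, exp (-V z)) * τ) := by ring
        linarith
      have m5 : (c * (V x - V y)) * exp (-V x) ≤ (1 - c) * exp (-V x) := by
        have : c * ((V x - V y) * exp (-V x)) = (c * (V x - V y)) * exp (-V x) := by ring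
        linarith
      have final : c * (V x - V y) ≤ 1 - c := le_of_mul_le_mul_right m5 hE
      have h7 : A < V x - V y := by linarith
      have h8 := mul_lt_mul_of_pos_left h7 hc
      linarith
    · rw [segment_eq_uIcc, ← hxu, uIcc_self, mem_singleton_iff] at hyseg
      rw [hyseg] at hyx; exact absurd hyx (lt_irrefl _)
    · rw [segment_eq_uIcc, uIcc_of_ge hxu.le] at hyseg
      obtain ⟨hy1, hy2⟩ := hyseg
      rcases eq_or_lt_of_le hy2 with h | hyx2
      · rw [h] at hyx; exact absurd hyx (lt_irrefl _)
      set τ := (V x - V y) / (x - y) with hτdef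
      have hτ : 0 < τ := div_pos (by linarith) (by linarith)
      have hτmul : τ * (x - y) = V x - V y := by
        rw [hτdef]; exact div_mul_cancel₀ _ (sub_pos.2 hyx2).ne'
      have hslope : ∀ z, x ≤ z → V x + τ * (z - x) ≤ V z := by
        intro z hz
        rcases eq_or_lt_of_le hz with h | h
        · rw [← h]; simp
        · have hs := hVconv.slope_mono_adjacent (mem_univ y) (mem_univ z) hyx2 h
          rw [← hτdef] at hs
          have h3 := (le_div_iff₀ (by linarith : (0:ℝ) < z - x)).1 hs
          linarith
      have htail := gs13_tail_right hτ (hmIntOn _) hslope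
      have hseg2 := gs13_seg_lower hVconv hyx2.le (hmIntOn (Ioc y x))
      rw [max_eq_right hyx.le] at hseg2
      have hsub : (∫ z in Ioc y x, exp (-V z)) ≤ ∫ z in Ioc (T x) x, exp (-V z) :=
        setIntegral_mono_set (hmIntOn _) (ae_of_all _ fun z => (exp_pos _).le)
          (HasSubset.Subset.eventuallyLE (Ioc_subset_Ioc_left hy1))
      have hcond := hsand_lb (Ioi (T x)) measurableSet_Ioi
      rw [hIoi x] at hcond
      rw [hsplitIoi hxu.le] at hcond
      have hI0 : (∫ z in Ioi x, exp (-V z)) * τ ≤ exp (-V x) := (le_div_iff₀ hτ).1 htail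
      have hE := exp_pos (-V x)
      have step1 : c * (∫ z in Ioc (T x) x, exp (-V z))
          ≤ (1 - c) * ∫ z in Ioi x, exp (-V z) := by linarith
      have m0 : (V x - V y) * exp (-V x) = τ * ((x - y) * exp (-V x)) := by
        rw [← hτmul]; ring
      have m1 : τ * ((x - y) * exp (-V x)) ≤ τ * ∫ z in Ioc (T x) x, exp (-V z) :=
        mul_le_mul_of_nonneg_left (le_trans hseg2 hsub) hτ.le
      have m2 : τ * (c * ∫ z in Ioc (T x) x, exp (-V z))
          ≤ τ * ((1 - c) * ∫ z in Ioi x, exp (-V z)) :=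
        mul_le_mul_of_nonneg_left step1 hτ.le
      have m3 : (1 - c) * ((∫ z in Ioi x, exp (-V z)) * τ) ≤ (1 - c) * exp (-V x) :=
        mul_le_mul_of_nonneg_left hI0 (by linarith)
      have m4 : c * ((V x - V y) * exp (-V x)) ≤ (1 - c) * exp (-V x) := by
        have mm1 : c * ((V x - V y) * exp (-V x))
            ≤ c * (τ * ∫ z in Ioc (T x) x, exp (-V z)) := by
          rw [m0]; exact mul_le_mul_of_nonneg_left m1 hc.le
        have e4 : c * (τ * ∫ z in Ioc (T x) x, exp (-V z))
            = τ * (c * ∫ z in Ioc (T x) x, exp (-V z)) := by ring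
        have e5 : τ * ((1 - c) * ∫ z in Ioi x, exp (-V z))
            = (1 - c) * ((∫ z in Ioi x, exp (-V z)) * τ) := by ring
        linarith
      have m5 : (c * (V x - V y)) * exp (-V x) ≤ (1 - c) * exp (-V x) := by
        have : c * ((V x - V y) * exp (-V x)) = (c * (V x - V y)) * exp (-V x) := by ring
        linarith
      have final : c * (V x - V y) ≤ 1 - c := le_of_mul_le_mul_right m5 hE
      have h7 : A < V x - V y := by linarith
      have h8 := mul_lt_mul_of_pos_left h7 hc
      linarith
  -- assemble the constants
  refine ⟨c * exp (-(A + B)), C * exp (A + B), by positivity, ?_, ?_⟩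
  · have h1 : exp (-(A + B)) ≤ exp (A + B) := exp_le_exp.2 (by linarith)
    have h2 : c * exp (-(A + B)) ≤ c * exp (A + B) := mul_le_mul_of_nonneg_left h1 hc.le
    have h3 : c * exp (A + B) < C * exp (A + B) := mul_lt_mul_of_pos_right hcC (exp_pos _)
    linarith
  · intro α hα x
    obtain ⟨hα0, hα1⟩ := hα
    have hu1 : V (T x) ≤ V x + B := K2 x
    have hu2 : V x - A ≤ V (T x) := K1 x (T x) (right_mem_segment ℝ x (T x))
    have hseg : (1 - α) * x + α * T x ∈ segment ℝ x (T x) :=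
      ⟨1 - α, α, by linarith, hα0, by ring, by rw [smul_eq_mul, smul_eq_mul]⟩
    have hxα_ub : V ((1 - α) * x + α * T x) ≤ V x + B :=
      le_trans (hVconv.le_on_segment (mem_univ _) (mem_univ _) hseg)
        (max_le (by linarith) hu1)
    have hxα_lb : V x - A ≤ V ((1 - α) * x + α * T x) := K1 x _ hseg
    have hfu_pos := hfpos (T x)
    have hT' : deriv T x = exp (-V x) / f (T x) := hMA x
    have eA : exp (-A) * exp (-V (T x)) ≤ exp (-V x) := by
      rw [← exp_add]; exact exp_le_exp.2 (by linarith)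
    have eB : exp (-V x) ≤ exp B * exp (-V (T x)) := by
      rw [← exp_add]; exact exp_le_exp.2 (by linarith)
    have hT'lb : exp (-A) / C ≤ deriv T x := by
      rw [hT', div_le_div_iff₀ hC0 hfu_pos]
      calc exp (-A) * f (T x) ≤ exp (-A) * (C * exp (-V (T x))) :=
            mul_le_mul_of_nonneg_left (hfb2 (T x)) (exp_pos _).le
        _ = C * (exp (-A) * exp (-V (T x))) := by ring
        _ ≤ C * exp (-V x) := mul_le_mul_of_nonneg_left eA hC0.le
        _ = exp (-V x) * C := by ring
    have hT'ub : deriv T x ≤ exp B / c := by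
      rw [hT', div_le_div_iff₀ hfu_pos hc]
      calc exp (-V x) * c ≤ (exp B * exp (-V (T x))) * c :=
            mul_le_mul_of_nonneg_right eB hc.le
        _ = exp B * (c * exp (-V (T x))) := by ring
        _ ≤ exp B * f (T x) := mul_le_mul_of_nonneg_left (hfb1 (T x)) (exp_pos _).le
    have hk1 : exp (-A) / C ≤ 1 := by
      rw [div_le_one hC0]
      exact le_trans (exp_le_one_iff.2 (by linarith)) hC1
    have hk2 : (1:ℝ) ≤ exp B / c := by
      rw [le_div_iff₀ hc, one_mul]
      exact le_trans hc1 (one_le_exp hB)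
    have hDlb : exp (-A) / C ≤ (1 - α) + α * deriv T x := by
      nlinarith [mul_nonneg (by linarith : (0:ℝ) ≤ 1 - α)
          (by linarith : (0:ℝ) ≤ 1 - exp (-A) / C),
        mul_nonneg hα0 (by linarith : (0:ℝ) ≤ deriv T x - exp (-A) / C)]
    have hDub : (1 - α) + α * deriv T x ≤ exp B / c := by
      nlinarith [mul_nonneg (by linarith : (0:ℝ) ≤ 1 - α)
          (by linarith : (0:ℝ) ≤ exp B / c - 1),
        mul_nonneg hα0 (by linarith : (0:ℝ) ≤ exp B / c - deriv T x)]
    have hDpos : 0 < (1 - α) + α * deriv T x := lt_of_lt_of_le (by positivity) hDlb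
    constructor
    · rw [le_div_iff₀ hDpos]
      calc c * exp (-(A + B)) * exp (-V ((1 - α) * x + α * T x)) * ((1 - α) + α * deriv T x)
          ≤ c * exp (-(A + B)) * exp (-V ((1 - α) * x + α * T x)) * (exp B / c) :=
            mul_le_mul_of_nonneg_left hDub (by positivity)
        _ = exp (-(A + B)) * exp B * exp (-V ((1 - α) * x + α * T x)) * (c / c) := by ring
        _ = exp (-A) * exp (-V ((1 - α) * x + α * T x)) := by
            rw [div_self hc.ne', mul_one, ← exp_add,
              show -(A + B) + B = -A from by ring]
        _ ≤ exp (-V x) := by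
            rw [← exp_add]; exact exp_le_exp.2 (by linarith)
    · rw [div_le_iff₀ hDpos]
      calc exp (-V x) ≤ exp B * exp (-V ((1 - α) * x + α * T x)) := by
            rw [← exp_add]; exact exp_le_exp.2 (by linarith)
        _ = C * exp (A + B) * exp (-V ((1 - α) * x + α * T x)) * (exp (-A) / C) := by
            have hexp : exp (A + B) * exp (-A) = exp B := by
              rw [← exp_add, show A + B + -A = B from by ring]
            rw [show C * exp (A + B) * exp (-V ((1 - α) * x + α * T x)) * (exp (-A) / C)
                = (exp (A + B) * exp (-A)) * exp (-V ((1 - α) * x + α * T x)) * (C / C)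
              from by ring, div_self hC0.ne', mul_one, hexp]
        _ ≤ C * exp (A + B) * exp (-V ((1 - α) * x + α * T x)) * ((1 - α) + α * deriv T x) :=
            mul_le_mul_of_nonneg_left hDlb (by positivity)
end
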